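/- arXiv:1609.07003 — 2 statements merged into one kernel-verified Lean document; each statement's English description precedes it below -/
import Mathlib

section
/- For every real ε, the functions J(q₁,q₂,p₁,p₂) = (1/2)(q₁²+p₁²) − (q₂²+p₂²) and H(q₁,q₂,p₁,p₂) = 2q₁p₁q₂ + (q₁²−p₁²)p₂ + εR(q,p)², where R(q,p) = (1/2)(q₁²+p₁²) + (q₂²+p₂²), Poisson commute: at every point of ℝ⁴ one has (∂J/∂q₁)(∂H/∂p₁) + (∂J/∂q₂)(∂H/∂p₂) − (∂J/∂p₁)(∂H/∂q₁) − (∂J/∂p₂)(∂H/∂q₂) = 0, the partial derivatives being directional (Fréchet) derivatives of these polynomial functions on ℝ⁴. -/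
noncomputable section

/-- The momentum `J` of the 1:(−2) resonant system, in coordinates `(q₁, q₂, p₁, p₂)`. -/
def J12 (x : ℝ × ℝ × ℝ × ℝ) : ℝ :=
  (1 / 2) * (x.1 ^ 2 + x.2.2.1 ^ 2) - (x.2.1 ^ 2 + x.2.2.2 ^ 2)

/-- The 1:2 oscillator `R`, in coordinates `(q₁, q₂, p₁, p₂)`. -/
def R12 (x : ℝ × ℝ × ℝ × ℝ) : ℝ :=
  (1 / 2) * (x.1 ^ 2 + x.2.2.1 ^ 2) + (x.2.1 ^ 2 + x.2.2.2 ^ 2)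

/-- The energy `H` of the 1:(−2) resonant system, in coordinates `(q₁, q₂, p₁, p₂)`. -/
def H12 (ε : ℝ) (x : ℝ × ℝ × ℝ × ℝ) : ℝ :=
  2 * x.1 * x.2.2.1 * x.2.1 + (x.1 ^ 2 - x.2.2.1 ^ 2) * x.2.2.2 + ε * (R12 x) ^ 2

section aux

variable (x v : ℝ × ℝ × ℝ × ℝ)

lemma hq1 : HasFDerivAt (fun x : ℝ × ℝ × ℝ × ℝ => x.1)
    (ContinuousLinearMap.fst ℝ ℝ (ℝ × ℝ × ℝ)) x := hasFDerivAt_fst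

lemma hq2 : HasFDerivAt (fun x : ℝ × ℝ × ℝ × ℝ => x.2.1)
    ((ContinuousLinearMap.fst ℝ ℝ (ℝ × ℝ)).comp (ContinuousLinearMap.snd ℝ ℝ (ℝ × ℝ × ℝ))) x :=
  hasFDerivAt_fst.comp x hasFDerivAt_snd

lemma hp1 : HasFDerivAt (fun x : ℝ × ℝ × ℝ × ℝ => x.2.2.1)
    (((ContinuousLinearMap.fst ℝ ℝ ℝ).comp (ContinuousLinearMap.snd ℝ ℝ (ℝ × ℝ))).comp
      (ContinuousLinearMap.snd ℝ ℝ (ℝ × ℝ × ℝ))) x :=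
  (hasFDerivAt_fst.comp x.2 hasFDerivAt_snd).comp x hasFDerivAt_snd

lemma hp2 : HasFDerivAt (fun x : ℝ × ℝ × ℝ × ℝ => x.2.2.2)
    (((ContinuousLinearMap.snd ℝ ℝ ℝ).comp (ContinuousLinearMap.snd ℝ ℝ (ℝ × ℝ))).comp
      (ContinuousLinearMap.snd ℝ ℝ (ℝ × ℝ × ℝ))) x :=
  (hasFDerivAt_snd.comp x.2 hasFDerivAt_snd).comp x hasFDerivAt_snd

lemma fderivJ : fderiv ℝ J12 x v =
    x.1 * v.1 + x.2.2.1 * v.2.2.1 - (2 * x.2.1 * v.2.1 + 2 * x.2.2.2 * v.2.2.2) := by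
  have hfun : J12 = fun x : ℝ × ℝ × ℝ × ℝ =>
      (1 / 2) * (x.1 * x.1 + x.2.2.1 * x.2.2.1) - (x.2.1 * x.2.1 + x.2.2.2 * x.2.2.2) := by
    funext x; simp [J12]; ring
  have h := ((((hq1 x).mul (hq1 x)).add ((hp1 x).mul (hp1 x))).const_mul (1/2 : ℝ)).sub
      (((hq2 x).mul (hq2 x)).add ((hp2 x).mul (hp2 x)))
  erw [hfun, h.fderiv]
  simp
  ring

lemma fderivR : fderiv ℝ R12 x v =
    x.1 * v.1 + x.2.2.1 * v.2.2.1 + (2 * x.2.1 * v.2.1 + 2 * x.2.2.2 * v.2.2.2) := by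
  have hfun : R12 = fun x : ℝ × ℝ × ℝ × ℝ =>
      (1 / 2) * (x.1 * x.1 + x.2.2.1 * x.2.2.1) + (x.2.1 * x.2.1 + x.2.2.2 * x.2.2.2) := by
    funext x; simp [R12]; ring
  have h := ((((hq1 x).mul (hq1 x)).add ((hp1 x).mul (hp1 x))).const_mul (1/2 : ℝ)).add
      (((hq2 x).mul (hq2 x)).add ((hp2 x).mul (hp2 x)))
  erw [hfun, h.fderiv]
  simp
  ring

lemma hR12 : HasFDerivAt R12 (fderiv ℝ R12 x) x := by
  have hfun : R12 = fun x : ℝ × ℝ × ℝ × ℝ =>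
      (1 / 2) * (x.1 * x.1 + x.2.2.1 * x.2.2.1) + (x.2.1 * x.2.1 + x.2.2.2 * x.2.2.2) := by
    funext x; simp [R12]; ring
  have h := ((((hq1 x).mul (hq1 x)).add ((hp1 x).mul (hp1 x))).const_mul (1/2 : ℝ)).add
      (((hq2 x).mul (hq2 x)).add ((hp2 x).mul (hp2 x)))
  rw [hfun]
  exact h.differentiableAt.hasFDerivAt

lemma fderivH (ε : ℝ) : fderiv ℝ (H12 ε) x v =
    (2 * x.2.2.1 * x.2.1 + 2 * x.1 * x.2.2.2) * v.1
    + (2 * x.1 * x.2.2.1) * v.2.1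
    + (2 * x.1 * x.2.1 - 2 * x.2.2.1 * x.2.2.2) * v.2.2.1
    + (x.1 ^ 2 - x.2.2.1 ^ 2) * v.2.2.2
    + 2 * ε * R12 x * fderiv ℝ R12 x v := by
  have hfun : H12 ε = fun x : ℝ × ℝ × ℝ × ℝ =>
      (2 * x.1 * x.2.2.1 * x.2.1 + (x.1 * x.1 - x.2.2.1 * x.2.2.1) * x.2.2.2)
        + ε * (R12 x * R12 x) := by
    funext x; simp [H12]; ring
  have h := (((((hq1 x).const_mul 2).mul (hp1 x)).mul (hq2 x)).add
      ((((hq1 x).mul (hq1 x)).sub ((hp1 x).mul (hp1 x))).mul (hp2 x))).add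
      (((hR12 x).mul (hR12 x)).const_mul ε)
  erw [hfun, h.fderiv]
  simp
  ring

end aux

/-- The functions `J` and `H` of the 1:(−2) resonant system Poisson commute:
`{J, H} = ∂J/∂q₁ ∂H/∂p₁ + ∂J/∂q₂ ∂H/∂p₂ − ∂J/∂p₁ ∂H/∂q₁ − ∂J/∂p₂ ∂H/∂q₂ = 0`
at every point of `ℝ⁴`, the partial derivatives being directional (Fréchet) derivatives. -/
theorem poisson_commute_one_minus_two (ε : ℝ) (x : ℝ × ℝ × ℝ × ℝ) :
    fderiv ℝ J12 x (1, 0, 0, 0) * fderiv ℝ (H12 ε) x (0, 0, 1, 0)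
      + fderiv ℝ J12 x (0, 1, 0, 0) * fderiv ℝ (H12 ε) x (0, 0, 0, 1)
      - fderiv ℝ J12 x (0, 0, 1, 0) * fderiv ℝ (H12 ε) x (1, 0, 0, 0)
      - fderiv ℝ J12 x (0, 0, 0, 1) * fderiv ℝ (H12 ε) x (0, 1, 0, 0) = 0 := by
  simp only [fderivJ, fderivH, fderivR]
  ring
end
end

section
/- Let H : ℝ³×ℝ³ → ℝ be defined by H(x,y) = Re((x₂+ix₃)²·(y₂−iy₃)). Then for all x,y ∈ ℝ³: x₃·(∂H/∂x₂)(x,y) − x₂·(∂H/∂x₃)(x,y) + 2(y₃·(∂H/∂y₂)(x,y) − y₂·(∂H/∂y₃)(x,y)) = 0, the partial derivatives being directional (Fréchet) derivatives. (This says that J(x,y) = x₁ + 2y₁ and H Poisson commute with respect to the product Lie–Poisson bracket on so(3)*×so(3)*, since ∇ₓJ = e₁ and ∇_yJ = 2e₁, and {f,g}(x,y) = ⟨x, ∇ₓf × ∇ₓg⟩ + ⟨y, ∇_yf × ∇_yg⟩.) -/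
noncomputable section

/-- The energy `H(x,y) = Re((x₂+ix₃)²·(y₂−iy₃))` on `ℝ³ × ℝ³` (0-based indices, so
`x₂ = x 1`, `x₃ = x 2`, etc.). -/
def Hs2 (v : (Fin 3 → ℝ) × (Fin 3 → ℝ)) : ℝ :=
  ((((v.1 1 : ℂ) + Complex.I * (v.1 2 : ℂ)) ^ 2)
    * ((v.2 1 : ℂ) - Complex.I * (v.2 2 : ℂ))).re

lemma Hs2_eq : Hs2 = fun v : (Fin 3 → ℝ) × (Fin 3 → ℝ) =>
    (v.1 1 * v.1 1 - v.1 2 * v.1 2) * v.2 1 + 2 * v.1 1 * v.1 2 * v.2 2 := by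
  funext v
  have : v.1 1 * v.1 2 + v.1 2 * v.1 1 = 2 * v.1 1 * v.1 2 := by ring
  simp [Hs2, pow_two, Complex.mul_re, Complex.mul_im, this]

open ContinuousLinearMap in
/-- `x₃·∂H/∂x₂ − x₂·∂H/∂x₃ + 2(y₃·∂H/∂y₂ − y₂·∂H/∂y₃) = 0` for all `x, y ∈ ℝ³`,
the partial derivatives being directional (Fréchet) derivatives; i.e. `J = x₁ + 2y₁`
and `H` Poisson commute for the product Lie–Poisson bracket on `so(3)* × so(3)*`. -/
theorem lie_poisson_commute_s2s2 (x y : Fin 3 → ℝ) :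
    x 2 * fderiv ℝ Hs2 (x, y) (Pi.single 1 1, 0)
      - x 1 * fderiv ℝ Hs2 (x, y) (Pi.single 2 1, 0)
      + 2 * (y 2 * fderiv ℝ Hs2 (x, y) (0, Pi.single 1 1)
          - y 1 * fderiv ℝ Hs2 (x, y) (0, Pi.single 2 1)) = 0 := by
  set E := (Fin 3 → ℝ) × (Fin 3 → ℝ)
  set a : E →L[ℝ] ℝ := (ContinuousLinearMap.proj 1).comp (fst ℝ (Fin 3 → ℝ) (Fin 3 → ℝ))
  set b : E →L[ℝ] ℝ := (ContinuousLinearMap.proj 2).comp (fst ℝ (Fin 3 → ℝ) (Fin 3 → ℝ))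
  set c : E →L[ℝ] ℝ := (ContinuousLinearMap.proj 1).comp (snd ℝ (Fin 3 → ℝ) (Fin 3 → ℝ))
  set d : E →L[ℝ] ℝ := (ContinuousLinearMap.proj 2).comp (snd ℝ (Fin 3 → ℝ) (Fin 3 → ℝ))
  have ha : HasFDerivAt (fun v : E => v.1 1) a (x, y) := a.hasFDerivAt
  have hb : HasFDerivAt (fun v : E => v.1 2) b (x, y) := b.hasFDerivAt
  have hc : HasFDerivAt (fun v : E => v.2 1) c (x, y) := c.hasFDerivAt
  have hd : HasFDerivAt (fun v : E => v.2 2) d (x, y) := d.hasFDerivAt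
  have hH := ((((ha.mul ha).sub (hb.mul hb)).mul hc).add ((((ha.const_mul 2).mul hb).mul hd)))
  have hfd := hH.fderiv
  replace hfd : fderiv ℝ Hs2 (x, y) = _ := (congrArg (fderiv ℝ · (x, y)) Hs2_eq).trans hfd
  rw [hfd]
  simp [a, b, c, d, Pi.single_apply]
  ring
end
end
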